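/- Let X₁,…,X_d be independent with Xᵢ ~ Poisson(m·pᵢ) and Z = Σᵢ ((Xᵢ − m·qᵢ)² − Xᵢ) where p, q ∈ [0,1]^d. Then E[Z] = m²‖p−q‖₂² and Var(Z) ≤ 4m³‖p‖₂·‖p−q‖₄² + 2m²‖p‖₂². -/

import Mathlib

/-- Poisson probability mass function with mean μ. -/
noncomputable def pois (μ : ℝ) (k : ℕ) : ℝ :=
  Real.exp (-μ) * μ^k / (Nat.factorial k)

/-- Joint PMF of independent Poisson variables with means μ i. -/
noncomputable def jointPois {d : ℕ} (μ : Fin d → ℝ) (x : Fin d → ℕ) : ℝ :=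
  ∏ i, pois (μ i) (x i)

lemma hasSum_pois (μ : ℝ) : HasSum (pois μ) 1 := by
  have h := NormedSpace.expSeries_div_hasSum_exp μ
  rw [← Real.exp_eq_exp_ℝ] at h
  have h2 := h.mul_left (Real.exp (-μ))
  rw [← Real.exp_add, neg_add_cancel, Real.exp_zero] at h2
  have : (fun k => Real.exp (-μ) * (μ ^ k / (Nat.factorial k : ℝ))) = pois μ := by
    funext k; unfold pois; ring
  rwa [this] at h2

lemma hasSum_pois_df (μ : ℝ) (r : ℕ) :
    HasSum (fun k => pois μ k * (k.descFactorial r : ℝ)) (μ ^ r) := by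
  have hinj : Function.Injective (fun j : ℕ => j + r) := fun a b h => by
    simpa using h
  have hsupp : ∀ k : ℕ, k ∉ Set.range (fun j : ℕ => j + r) →
      pois μ k * (k.descFactorial r : ℝ) = 0 := by
    intro k h
    have hk' : k < r := by
      rcases lt_or_ge k r with h' | h'
      · exact h'
      · exact absurd ⟨k - r, by simp; omega⟩ h
    simp [Nat.descFactorial_eq_zero_iff_lt.2 hk']
  have key : ∀ j : ℕ, pois μ (j + r) * ((j + r).descFactorial r : ℝ) = μ ^ r * pois μ j := by
    intro j
    have hfac := Nat.factorial_mul_descFactorial (n := j + r) (k := r) (by omega)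
    rw [Nat.add_sub_cancel] at hfac
    have hfacR : (Nat.factorial j : ℝ) * ((j + r).descFactorial r : ℝ)
        = ((j + r).factorial : ℝ) := by exact_mod_cast hfac
    have h1 : (Nat.factorial (j + r) : ℝ) ≠ 0 := Nat.cast_ne_zero.2 (Nat.factorial_ne_zero _)
    have h2 : (Nat.factorial j : ℝ) ≠ 0 := Nat.cast_ne_zero.2 (Nat.factorial_ne_zero _)
    unfold pois
    field_simp
    rw [pow_add]
    linear_combination (μ ^ j * μ ^ r) * hfacR
  rw [← Function.Injective.hasSum_iff hinj hsupp]
  have h3 := (hasSum_pois μ).mul_left (μ ^ r)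
  rw [mul_one] at h3
  have : ((fun k => pois μ k * (k.descFactorial r : ℝ)) ∘ (fun j : ℕ => j + r))
      = fun j => μ ^ r * pois μ j := funext key
  rw [this]
  exact h3

lemma df1 (k : ℕ) : ((k.descFactorial 1 : ℕ) : ℝ) = k := by
  simp [Nat.descFactorial]

lemma df2 (k : ℕ) : ((k.descFactorial 2 : ℕ) : ℝ) = (k : ℝ)^2 - k := by
  match k with
  | 0 => norm_num [Nat.descFactorial]
  | (n+1) => simp [Nat.descFactorial]; ring

lemma df3 (k : ℕ) : ((k.descFactorial 3 : ℕ) : ℝ) = (k:ℝ)^3 - 3*(k:ℝ)^2 + 2*k := by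
  match k with
  | 0 => norm_num [Nat.descFactorial]
  | 1 => norm_num [Nat.descFactorial]
  | (n+2) => simp [Nat.descFactorial]; ring

lemma df4 (k : ℕ) : ((k.descFactorial 4 : ℕ) : ℝ) = (k:ℝ)^4 - 6*(k:ℝ)^3 + 11*(k:ℝ)^2 - 6*k := by
  match k with
  | 0 => norm_num [Nat.descFactorial]
  | 1 => norm_num [Nat.descFactorial]
  | 2 => norm_num [Nat.descFactorial]
  | (n+3) => simp [Nat.descFactorial]; ring

lemma hasSum_pois_poly (μ : ℝ) (a0 a1 a2 a3 a4 : ℝ) (Q : ℕ → ℝ)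
    (hQ : ∀ k : ℕ, Q k = a0 + a1 * k + a2 * (k:ℝ)^2 + a3 * (k:ℝ)^3 + a4 * (k:ℝ)^4) :
    HasSum (fun k => pois μ k * Q k)
      (a0 + a1 * μ + a2 * (μ^2 + μ) + a3 * (μ^3 + 3*μ^2 + μ)
        + a4 * (μ^4 + 6*μ^3 + 7*μ^2 + μ)) := by
  have D0 := (hasSum_pois_df μ 0).mul_left a0
  have D1 := (hasSum_pois_df μ 1).mul_left (a1 + a2 + a3 + a4)
  have D2 := (hasSum_pois_df μ 2).mul_left (a2 + 3*a3 + 7*a4)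
  have D3 := (hasSum_pois_df μ 3).mul_left (a3 + 6*a4)
  have D4 := (hasSum_pois_df μ 4).mul_left a4
  have H := (((D0.add D1).add D2).add D3).add D4
  have hfun : (fun k => a0 * (pois μ k * (k.descFactorial 0 : ℝ))
        + (a1 + a2 + a3 + a4) * (pois μ k * (k.descFactorial 1 : ℝ))
        + (a2 + 3*a3 + 7*a4) * (pois μ k * (k.descFactorial 2 : ℝ))
        + (a3 + 6*a4) * (pois μ k * (k.descFactorial 3 : ℝ))
        + a4 * (pois μ k * (k.descFactorial 4 : ℝ)))
      = fun k => pois μ k * Q k := by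
    funext k
    rw [hQ k, df1, df2, df3, df4]
    norm_num
    ring
  rw [hfun] at H
  convert H using 1
  · rfl
  ring

lemma hasSum_pois_Y (m pi qi : ℝ) :
    HasSum (fun k => pois (m * pi) k * (((k:ℝ) - m * qi)^2 - k))
      (m^2 * (pi - qi)^2) := by
  have h := hasSum_pois_poly (m * pi) ((m*qi)^2) (-(2*(m*qi)+1)) 1 0 0
      (fun k => ((k:ℝ) - m*qi)^2 - k) (fun k => by ring)
  convert h using 1
  ring

lemma hasSum_pois_W (m pi qi : ℝ) :
    HasSum (fun k => pois (m * pi) k *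
      ((((k:ℝ) - m * qi)^2 - k) - m^2 * (pi - qi)^2)) 0 := by
  have h1 := hasSum_pois_Y m pi qi
  have h2 := (hasSum_pois (m * pi)).mul_left (m^2 * (pi - qi)^2)
  have h := h1.sub h2
  have hfun : (fun k => pois (m*pi) k * (((k:ℝ) - m*qi)^2 - k)
        - m^2 * (pi - qi)^2 * pois (m*pi) k)
      = fun k => pois (m * pi) k * ((((k:ℝ) - m * qi)^2 - k) - m^2 * (pi - qi)^2) := by
    funext k; ring
  rw [hfun] at h
  convert h using 1
  · rfl
  ring

lemma hasSum_pois_Wsq (m pi qi : ℝ) :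
    HasSum (fun k => pois (m * pi) k *
      ((((k:ℝ) - m * qi)^2 - k) - m^2 * (pi - qi)^2)^2)
      (4 * m^3 * pi * (pi - qi)^2 + 2 * m^2 * pi^2) := by
  have hb : m^2 * (pi - qi)^2 = (m*pi - m*qi)^2 := by ring
  have h := hasSum_pois_poly (m * pi)
      ((( m*qi)^2 - (m*pi - m*qi)^2)^2)
      (-2*(2*(m*qi)+1)*((m*qi)^2 - (m*pi - m*qi)^2))
      ((2*(m*qi)+1)^2 + 2*((m*qi)^2 - (m*pi - m*qi)^2))
      (-2*(2*(m*qi)+1)) 1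
      (fun k => ((((k:ℝ) - m * qi)^2 - k) - m^2 * (pi - qi)^2)^2)
      (fun k => by rw [hb]; ring)
  convert h using 1
  ring

lemma hasSum_pi_prod : ∀ {n : ℕ} (G : Fin n → ℕ → ℝ) (S : Fin n → ℝ),
    (∀ i, HasSum (G i) (S i)) →
    HasSum (fun x : Fin n → ℕ => ∏ i, G i (x i)) (∏ i, S i) := by
  intro n
  induction n with
  | zero =>
    intro G S h
    simp only [Finset.univ_eq_empty, Finset.prod_empty]
    simpa using hasSum_fintype (fun _ : Fin 0 → ℕ => (1:ℝ))
  | succ n ih =>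
    intro G S h
    rw [← Equiv.hasSum_iff (Fin.consEquiv (fun _ : Fin (n+1) => ℕ))]
    have hH : HasSum (fun y : Fin n → ℕ => ∏ i, G i.succ (y i)) (∏ i : Fin n, S i.succ) :=
      ih (fun i : Fin n => G i.succ) (fun i : Fin n => S i.succ) (fun i => h i.succ)
    have hs1 : Summable fun k => ‖G 0 k‖ := (h 0).summable.norm
    have hs2 : Summable fun y : Fin n → ℕ => ‖∏ i, G i.succ (y i)‖ := hH.summable.norm
    have hs3 := summable_mul_of_summable_norm hs1 hs2
    have hmul := HasSum.mul (h 0) hH hs3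
    have hfun : ((fun x : Fin (n+1) → ℕ => ∏ i, G i (x i)) ∘
          (Fin.consEquiv (fun _ : Fin (n+1) => ℕ)))
        = fun z : ℕ × (Fin n → ℕ) => G 0 z.1 * ∏ i, G i.succ (z.2 i) := by
      funext z
      simp [Fin.consEquiv, Fin.prod_univ_succ]
    rw [hfun, Fin.prod_univ_succ]
    exact hmul

lemma prod_update_apply {d : ℕ} (g : Fin d → ℕ → ℝ) (i : Fin d) (G : ℕ → ℝ)
    (x : Fin d → ℕ) :
    (∏ j, (Function.update g i G j) (x j))
      = G (x i) * ∏ j ∈ Finset.univ.erase i, g j (x j) := by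
  have hfn : (fun j => (Function.update g i G j) (x j))
      = Function.update (fun j => g j (x j)) i (G (x i)) := by
    funext j
    rcases eq_or_ne j i with rfl | hne
    · simp
    · simp [Function.update_of_ne hne]
  rw [hfn, Finset.prod_update_of_mem (Finset.mem_univ i), Finset.sdiff_singleton_eq_erase]

theorem stmt6 {d : ℕ} (m : ℝ) (hm : 0 < m) (p q : Fin d → ℝ)
    (hp : ∀ i, p i ∈ Set.Icc (0:ℝ) 1) (hq : ∀ i, q i ∈ Set.Icc (0:ℝ) 1) :
    (∑' x : Fin d → ℕ, jointPois (fun i => m * p i) x *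
        (∑ i, (((x i : ℝ) - m * q i)^2 - x i)))
      = m^2 * ∑ i, (p i - q i)^2 ∧
    (∑' x : Fin d → ℕ, jointPois (fun i => m * p i) x *
        ((∑ i, (((x i : ℝ) - m * q i)^2 - x i)) - m^2 * ∑ i, (p i - q i)^2)^2)
      ≤ 4 * m^3 * Real.sqrt (∑ i, (p i)^2) * Real.sqrt (∑ i, (p i - q i)^4)
          + 2 * m^2 * (∑ i, (p i)^2) := by
  classical
  set g : Fin d → ℕ → ℝ := fun i => pois (m * p i) with hgdef
  -- part 1
  have key1 : HasSum (fun x : Fin d → ℕ => jointPois (fun i => m * p i) x *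
      (∑ i, (((x i : ℝ) - m * q i)^2 - x i))) (∑ i, m^2 * (p i - q i)^2) := by
    have hterm : ∀ i : Fin d, HasSum
        (fun x : Fin d → ℕ => ∏ j, (Function.update g i
          (fun k => g i k * (((k:ℝ) - m * q i)^2 - k)) j) (x j))
        (m^2 * (p i - q i)^2) := by
      intro i
      have h := hasSum_pi_prod
        (Function.update g i (fun k => g i k * (((k:ℝ) - m * q i)^2 - k)))
        (Function.update (fun _ => (1:ℝ)) i (m^2 * (p i - q i)^2)) ?_
      · rwa [Finset.prod_update_of_mem (Finset.mem_univ i),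
          Finset.prod_const_one, mul_one] at h
      · intro j
        rcases eq_or_ne j i with rfl | hne
        · simpa using hasSum_pois_Y m (p j) (q j)
        · simpa [Function.update_of_ne hne] using hasSum_pois (m * p j)
    have hsum := hasSum_sum (s := (Finset.univ : Finset (Fin d)))
      (fun i _ => hterm i)
    have hfun : (fun x : Fin d → ℕ => ∑ i, ∏ j, (Function.update g i
          (fun k => g i k * (((k:ℝ) - m * q i)^2 - k)) j) (x j))
        = fun x : Fin d → ℕ => jointPois (fun i => m * p i) x *
            (∑ i, (((x i : ℝ) - m * q i)^2 - x i)) := by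
      funext x
      rw [Finset.mul_sum]
      refine Finset.sum_congr rfl fun i _ => ?_
      rw [prod_update_apply]
      have hjp : jointPois (fun i => m * p i) x
          = g i (x i) * ∏ j ∈ Finset.univ.erase i, g j (x j) :=
        (Finset.mul_prod_erase _ _ (Finset.mem_univ i)).symm
      rw [hjp]; ring
    rwa [hfun] at hsum
  -- part 2
  have key2 : HasSum (fun x : Fin d → ℕ => jointPois (fun i => m * p i) x *
      ((∑ i, (((x i : ℝ) - m * q i)^2 - x i)) - m^2 * ∑ i, (p i - q i)^2)^2)
      (∑ i, (4 * m^3 * p i * (p i - q i)^2 + 2 * m^2 * (p i)^2)) := by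
    set W : Fin d → ℕ → ℝ :=
      fun i k => (((k:ℝ) - m * q i)^2 - k) - m^2 * (p i - q i)^2 with hWdef
    have hpair : ∀ i j : Fin d, HasSum
        (fun x : Fin d → ℕ => jointPois (fun i => m * p i) x * (W i (x i) * W j (x j)))
        (if i = j then 4 * m^3 * p i * (p i - q i)^2 + 2 * m^2 * (p i)^2 else 0) := by
      intro i j
      rcases eq_or_ne i j with rfl | hij
      · simp only [if_pos rfl]
        have h := hasSum_pi_prod
          (Function.update g i (fun k => g i k * (W i k)^2))
          (Function.update (fun _ => (1:ℝ)) i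
            (4 * m^3 * p i * (p i - q i)^2 + 2 * m^2 * (p i)^2)) ?_
        · rw [Finset.prod_update_of_mem (Finset.mem_univ i),
            Finset.prod_const_one, mul_one] at h
          have hfun : (fun x : Fin d → ℕ => ∏ l, (Function.update g i
                (fun k => g i k * (W i k)^2) l) (x l))
              = fun x : Fin d → ℕ => jointPois (fun i => m * p i) x *
                  (W i (x i) * W i (x i)) := by
            funext x
            rw [prod_update_apply]
            have hjp : jointPois (fun i => m * p i) x
                = g i (x i) * ∏ l ∈ Finset.univ.erase i, g l (x l) :=
              (Finset.mul_prod_erase _ _ (Finset.mem_univ i)).symm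
            rw [hjp]; ring
          rwa [hfun] at h
        · intro l
          rcases eq_or_ne l i with rfl | hne
          · simpa using hasSum_pois_Wsq m (p l) (q l)
          · simpa [Function.update_of_ne hne] using hasSum_pois (m * p l)
      · simp only [if_neg hij]
        have h := hasSum_pi_prod
          (Function.update (Function.update g i (fun k => g i k * W i k)) j
            (fun k => g j k * W j k))
          (Function.update (Function.update (fun _ => (1:ℝ)) i 0) j 0) ?_
        · have hzero : (∏ l, (Function.update (Function.update
              (fun _ => (1:ℝ)) i 0) j 0) l) = 0 :=
            Finset.prod_eq_zero (Finset.mem_univ j) (by simp)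
          rw [hzero] at h
          have hfun : (fun x : Fin d → ℕ => ∏ l, (Function.update
                (Function.update g i (fun k => g i k * W i k)) j
                (fun k => g j k * W j k) l) (x l))
              = fun x : Fin d → ℕ => jointPois (fun i => m * p i) x *
                  (W i (x i) * W j (x j)) := by
            funext x
            rw [prod_update_apply]
            have hi_mem : i ∈ Finset.univ.erase j :=
              Finset.mem_erase.2 ⟨hij, Finset.mem_univ i⟩
            have h2 : (∏ l ∈ Finset.univ.erase j,
                (Function.update g i (fun k => g i k * W i k) l) (x l))
                = (g i (x i) * W i (x i)) *
                    ∏ l ∈ (Finset.univ.erase j).erase i, g l (x l) := by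
              have hfn : (fun l => (Function.update g i
                    (fun k => g i k * W i k) l) (x l))
                  = Function.update (fun l => g l (x l)) i (g i (x i) * W i (x i)) := by
                funext l
                rcases eq_or_ne l i with rfl | hne
                · simp
                · simp [Function.update_of_ne hne]
              calc (∏ l ∈ Finset.univ.erase j,
                    (Function.update g i (fun k => g i k * W i k) l) (x l))
                  = ∏ l ∈ Finset.univ.erase j,
                      Function.update (fun l => g l (x l)) i
                        (g i (x i) * W i (x i)) l := by rw [hfn]
                _ = _ := by
                    rw [Finset.prod_update_of_mem hi_mem, Finset.sdiff_singleton_eq_erase]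
            rw [h2]
            have hjp : jointPois (fun i => m * p i) x
                = g j (x j) * ∏ l ∈ Finset.univ.erase j, g l (x l) :=
              (Finset.mul_prod_erase _ _ (Finset.mem_univ j)).symm
            have hjp2 : (∏ l ∈ Finset.univ.erase j, g l (x l))
                = g i (x i) * ∏ l ∈ (Finset.univ.erase j).erase i, g l (x l) :=
              (Finset.mul_prod_erase _ _ hi_mem).symm
            rw [hjp, hjp2]; ring
          rwa [hfun] at h
        · intro l
          rcases eq_or_ne l j with rfl | hnej
          · simpa using hasSum_pois_W m (p l) (q l)
          · rcases eq_or_ne l i with rfl | hnei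
            · simpa [Function.update_of_ne hnej] using hasSum_pois_W m (p l) (q l)
            · simpa [Function.update_of_ne hnej, Function.update_of_ne hnei]
                using hasSum_pois (m * p l)
    have hsum := hasSum_sum (s := (Finset.univ : Finset (Fin d)))
      (f := fun i (x : Fin d → ℕ) => ∑ j, jointPois (fun i => m * p i) x *
        (W i (x i) * W j (x j)))
      (a := fun i => ∑ j, if i = j then
        4 * m^3 * p i * (p i - q i)^2 + 2 * m^2 * (p i)^2 else 0)
      (fun i _ => hasSum_sum (s := (Finset.univ : Finset (Fin d)))
        (fun j _ => hpair i j))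
    have hval : (∑ i, ∑ j, if i = j then
          4 * m^3 * p i * (p i - q i)^2 + 2 * m^2 * (p i)^2 else 0)
        = ∑ i, (4 * m^3 * p i * (p i - q i)^2 + 2 * m^2 * (p i)^2) := by
      refine Finset.sum_congr rfl fun i _ => ?_
      simp
    rw [hval] at hsum
    have hfun : (fun x : Fin d → ℕ => ∑ i, ∑ j, jointPois (fun i => m * p i) x *
          (W i (x i) * W j (x j)))
        = fun x : Fin d → ℕ => jointPois (fun i => m * p i) x *
            ((∑ i, (((x i : ℝ) - m * q i)^2 - x i)) - m^2 * ∑ i, (p i - q i)^2)^2 := by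
      funext x
      have hW : (∑ i, (((x i : ℝ) - m * q i)^2 - x i)) - m^2 * ∑ i, (p i - q i)^2
          = ∑ i, W i (x i) := by
        rw [Finset.mul_sum, ← Finset.sum_sub_distrib]
      rw [hW, sq, Finset.sum_mul_sum]
      rw [Finset.mul_sum]
      refine Finset.sum_congr rfl fun i _ => ?_
      rw [Finset.mul_sum]
    rwa [hfun] at hsum
  constructor
  · rw [key1.tsum_eq, Finset.mul_sum]
  · rw [key2.tsum_eq]
    have hsplit : (∑ i, (4 * m^3 * p i * (p i - q i)^2 + 2 * m^2 * (p i)^2))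
        = 4 * m^3 * (∑ i, p i * (p i - q i)^2) + 2 * m^2 * (∑ i, (p i)^2) := by
      rw [Finset.mul_sum, Finset.mul_sum, ← Finset.sum_add_distrib]
      exact Finset.sum_congr rfl fun i _ => by ring
    rw [hsplit]
    have hcs : (∑ i, p i * (p i - q i)^2)
        ≤ Real.sqrt (∑ i, (p i)^2) * Real.sqrt (∑ i, (p i - q i)^4) := by
      have h := Real.sum_mul_le_sqrt_mul_sqrt Finset.univ p (fun i => (p i - q i)^2)
      have h4 : (∑ i, ((p i - q i)^2)^2) = ∑ i, (p i - q i)^4 := by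
        refine Finset.sum_congr rfl fun i _ => by ring
      rwa [h4] at h
    have hm3 : (0:ℝ) ≤ 4 * m^3 := by positivity
    nlinarith [mul_le_mul_of_nonneg_left hcs hm3]
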